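/- Let (X,ν) be a standard Borel probability space, f: X → X an invertible measure-preserving ergodic transformation, M a compact metric space, and φ: X → Homeo(M) measurable; let F(x,p) = (f(x), φ_x(p)) be the skew product on X×M, and let μ be an F-invariant ergodic Borel probability measure on X×M whose projection to X is ν, with fiberwise disintegration {μ_x}. Assume that for ν-a.e. x, (φ_x)_*μ_x = μ_{f(x)}. Suppose there exist a measurable set Λ ⊆ X×M and constants R > 0, C > 0, 0 < c < 1 such that: (i) μ(Λ) > 1/2; (ii) for every (x,p) ∈ Λ, μ_x(Λ_x) > 1/2, where Λ_x = {q ∈ M : (x,q) ∈ Λ}; (iii) for every (x,p) ∈ Λ, every q ∈ M with d(p,q) ≤ R, and every m ≥ 0, one has d(φ_x^{(m)}(p), φ_x^{(m)}(q)) ≤ C c^m d(p,q). Then for ν-almost every x in the projection B of Λ to X, the fiber measure μ_x has an atom: there exists p ∈ M with μ_x({p}) > 0. -/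

import Mathlib

open MeasureTheory Set
open scoped ENNReal

def fiberIter {X M : Type*} (f : X → X) (φ : X → M → M) : ℕ → X → M → M
  | 0, _, p => p
  | m + 1, x, p => φ (f^[m] x) (fiberIter f φ m x p)

lemma fiberIter_zero_eq {X M : Type*} (f : X → X) (φ : X → M → M) (x : X) :
    fiberIter f φ 0 x = id := by funext p; simp [fiberIter]

lemma fiberIter_succ_eq {X M : Type*} (f : X → X) (φ : X → M → M) (m : ℕ) (x : X) :
    fiberIter f φ (m + 1) x = (φ (f^[m] x)) ∘ (fiberIter f φ m x) := by
  funext p; simp [fiberIter]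

lemma fiberIter_continuous {X M : Type*} [TopologicalSpace M] (f : X → X) (φ : X → M → M)
    (hφ : ∀ x, Continuous (φ x)) (m : ℕ) (x : X) : Continuous (fiberIter f φ m x) := by
  induction m with
  | zero => rw [fiberIter_zero_eq]; exact continuous_id
  | succ m ih => rw [fiberIter_succ_eq]; exact (hφ _).comp ih

lemma atom_of_shrinking_balls {M : Type*} [MetricSpace M] [CompactSpace M]
    [MeasurableSpace M] [BorelSpace M]
    (μ : Measure M) [IsFiniteMeasure μ] {δ : ℝ≥0∞} {r : ℕ → ℝ}
    (hr : Filter.Tendsto r Filter.atTop (nhds 0))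
    (h : ∀ n, ∃ t : M, δ ≤ μ (Metric.closedBall t (r n))) :
    ∃ p : M, δ ≤ μ {p} := by
  choose t ht using h
  obtain ⟨p, -, σ, hσ, hσt⟩ := isCompact_univ.tendsto_subseq (x := t) (fun n => mem_univ _)
  have hball : ∀ ε : ℝ, 0 < ε → δ ≤ μ (Metric.closedBall p ε) := by
    intro ε hε
    have h1 : ∀ᶠ j in Filter.atTop, dist (t (σ j)) p ≤ ε / 2 := by
      have := Metric.tendsto_atTop.1 hσt (ε / 2) (by linarith)
      obtain ⟨N, hN⟩ := this
      exact Filter.eventually_atTop.2 ⟨N, fun j hj => (hN j hj).le⟩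
    have h2 : ∀ᶠ j in Filter.atTop, r (σ j) ≤ ε / 2 := by
      have hcomp : Filter.Tendsto (fun j => r (σ j)) Filter.atTop (nhds 0) :=
        hr.comp hσ.tendsto_atTop
      have := Metric.tendsto_atTop.1 hcomp (ε / 2) (by linarith)
      obtain ⟨N, hN⟩ := this
      refine Filter.eventually_atTop.2 ⟨N, fun j hj => ?_⟩
      have := hN j hj
      rw [Real.dist_eq, sub_zero] at this
      exact (le_abs_self _).trans this.le
    obtain ⟨j, hj1, hj2⟩ := (h1.and h2).exists
    refine (ht (σ j)).trans (measure_mono ?_)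
    intro q hq
    rw [Metric.mem_closedBall] at hq ⊢
    calc dist q p ≤ dist q (t (σ j)) + dist (t (σ j)) p := dist_triangle _ _ _
      _ ≤ ε / 2 + ε / 2 := add_le_add (hq.trans hj2) hj1
      _ = ε := by ring
  have hseq2 : ∀ n : ℕ, δ ≤ μ (Metric.closedBall p (1 / ((n : ℝ) + 1))) :=
    fun n => hball _ (by positivity)
  have hI := tendsto_measure_iInter_atTop (μ := μ)
    (s := fun n : ℕ => Metric.closedBall p (1 / ((n : ℝ) + 1)))
    (fun n => measurableSet_closedBall.nullMeasurableSet)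
    (fun i j hij => Metric.closedBall_subset_closedBall (by
      have : (i : ℝ) + 1 ≤ (j : ℝ) + 1 := by exact_mod_cast by omega
      exact one_div_le_one_div_of_le (by positivity) this))
    ⟨0, measure_ne_top μ _⟩
  have hIp : (⋂ n : ℕ, Metric.closedBall p (1 / ((n : ℝ) + 1))) = {p} := by
    ext q
    simp only [mem_iInter, Metric.mem_closedBall, mem_singleton_iff]
    constructor
    · intro hq
      by_contra hne
      have hd : 0 < dist q p := dist_pos.2 hne
      obtain ⟨n, hn⟩ := exists_nat_one_div_lt hd
      exact absurd (hq n) (by linarith)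
    · rintro rfl
      intro n
      simp only [dist_self]
      positivity
  rw [hIp] at hI
  exact ⟨p, ge_of_tendsto hI (Filter.Eventually.of_forall hseq2)⟩

theorem fiber_measures_have_atoms
    {X : Type*} [MeasurableSpace X] [StandardBorelSpace X]
    (ν : Measure X) [IsProbabilityMeasure ν]
    (f : X → X) (hf : MeasurePreserving f ν ν) (hfbij : Function.Bijective f)
    (hferg : Ergodic f ν)
    {M : Type*} [MetricSpace M] [CompactSpace M] [MeasurableSpace M] [BorelSpace M]
    (φ : X → M → M)
    (hφcont : ∀ x, Continuous (φ x)) (hφbij : ∀ x, Function.Bijective (φ x))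
    (hφmeas : Measurable fun z : X × M => φ z.1 z.2)
    (μ : Measure (X × M)) [IsProbabilityMeasure μ]
    (hFinv : MeasurePreserving (fun z : X × M => (f z.1, φ z.1 z.2)) μ μ)
    (hFerg : Ergodic (fun z : X × M => (f z.1, φ z.1 z.2)) μ)
    (hproj : μ.map Prod.fst = ν)
    (μx : X → Measure M) (hμxprob : ∀ x, IsProbabilityMeasure (μx x))
    (hdisint : ∀ E : Set (X × M), MeasurableSet E →
      μ E = ∫⁻ x, μx x {p | (x, p) ∈ E} ∂ν)
    (hequiv : ∀ᵐ x ∂ν, (μx x).map (φ x) = μx (f x))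
    (Λ : Set (X × M)) (hΛmeas : MeasurableSet Λ)
    (R C c : ℝ) (hR : 0 < R) (hC : 0 < C) (hc0 : 0 < c) (hc1 : c < 1)
    (hΛμ : 1 / 2 < μ Λ)
    (hΛfib : ∀ z ∈ Λ, 1 / 2 < μx z.1 {q : M | (z.1, q) ∈ Λ})
    (hcontr : ∀ z ∈ Λ, ∀ q : M, dist z.2 q ≤ R → ∀ m : ℕ,
      dist (fiberIter f φ m z.1 z.2) (fiberIter f φ m z.1 q) ≤ C * c ^ m * dist z.2 q) :
    ∀ᵐ x ∂ν, x ∈ Prod.fst '' Λ → ∃ p : M, 0 < μx x {p} := by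
  classical
  -- X is nonempty
  have hX : Nonempty X := by
    by_contra h
    rw [not_nonempty_iff] at h
    have h0 : (univ : Set X) = ∅ := Set.univ_eq_empty_iff.2 h
    have h1 := measure_univ (μ := ν)
    rw [h0, measure_empty] at h1
    exact zero_ne_one h1
  -- finite covering of M by balls of radius R/2
  obtain ⟨t0, ht0⟩ : ∃ t0 : Finset M, (univ : Set M) ⊆ ⋃ a ∈ t0, Metric.ball a (R / 2) := by
    apply isCompact_univ.elim_finite_subcover (fun a : M => Metric.ball a (R / 2))
      (fun _ => Metric.isOpen_ball)
    intro q _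
    exact mem_iUnion.2 ⟨q, Metric.mem_ball_self (by linarith)⟩
  set K : ℕ := t0.card with hK
  set δ : ℝ≥0∞ := (2 * ((K : ℝ≥0∞) + 1))⁻¹ with hδ
  have hδ_ne_top : (2 : ℝ≥0∞) * ((K : ℝ≥0∞) + 1) ≠ ⊤ := by finiteness
  have hδpos : 0 < δ := ENNReal.inv_pos.2 hδ_ne_top
  -- the covering pigeonhole claim
  have cov : ∀ (m' : Measure M) (S : Set M), 1 / 2 < m' S →
      ∃ a ∈ t0, δ ≤ m' (S ∩ Metric.ball a (R / 2)) := by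
    intro m' S hS
    by_contra hcon
    push_neg at hcon
    have hsub : S ⊆ ⋃ a ∈ t0, S ∩ Metric.ball a (R / 2) := by
      intro q hq
      rcases mem_iUnion₂.1 (ht0 (mem_univ q)) with ⟨a, ha, hqa⟩
      exact mem_iUnion₂.2 ⟨a, ha, hq, hqa⟩
    have hle1 : m' S ≤ ∑ a ∈ t0, m' (S ∩ Metric.ball a (R / 2)) :=
      (measure_mono hsub).trans (measure_biUnion_finset_le _ _)
    have hle2 : ∑ a ∈ t0, m' (S ∩ Metric.ball a (R / 2)) ≤ (K : ℝ≥0∞) * δ := by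
      calc ∑ a ∈ t0, m' (S ∩ Metric.ball a (R / 2)) ≤ t0.card • δ :=
            Finset.sum_le_card_nsmul _ _ δ (fun a ha => (hcon a ha).le)
        _ = (K : ℝ≥0∞) * δ := by rw [nsmul_eq_mul, hK]
    have hle3 : (K : ℝ≥0∞) * δ ≤ 1 / 2 := by
      have hx1 : ((K : ℝ≥0∞) + 1) * δ = 2⁻¹ := by
        rw [hδ, ENNReal.mul_inv (Or.inl two_ne_zero) (Or.inl (by simp : (2 : ℝ≥0∞) ≠ ⊤))]
        rw [← mul_assoc, mul_comm ((K : ℝ≥0∞) + 1) (2 : ℝ≥0∞)⁻¹, mul_assoc]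
        rw [ENNReal.mul_inv_cancel (by simp) (by finiteness), mul_one]
      calc (K : ℝ≥0∞) * δ ≤ ((K : ℝ≥0∞) + 1) * δ := by
            gcongr; exact le_self_add
        _ = 2⁻¹ := hx1
        _ = 1 / 2 := by rw [one_div]
    exact absurd (hle1.trans (hle2.trans hle3)) (not_le.2 hS)
  -- the full-measure equivariance-along-orbits set
  have hΩae : ∀ᵐ x ∂ν, ∀ m : ℕ, (μx (f^[m] x)).map (φ (f^[m] x)) = μx (f^[m + 1] x) := by
    rw [ae_all_iff]
    intro m
    have h0 : ν {x | ¬ ((μx x).map (φ x) = μx (f x))} = 0 := ae_iff.1 hequiv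
    rw [ae_iff]
    have h1 : {x | ¬ ((μx (f^[m] x)).map (φ (f^[m] x)) = μx (f^[m + 1] x))} =
        f^[m] ⁻¹' {x | ¬ ((μx x).map (φ x) = μx (f x))} := by
      ext x
      simp [Function.iterate_succ_apply']
    rw [h1]
    exact (hf.iterate m).quasiMeasurePreserving.preimage_null h0
  -- pushforward of the fiber measures along orbits
  have horb : ∀ y, (∀ m : ℕ, (μx (f^[m] y)).map (φ (f^[m] y)) = μx (f^[m + 1] y)) →
      ∀ m : ℕ, μx (f^[m] y) = (μx y).map (fiberIter f φ m y) := by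
    intro y hy m
    induction m with
    | zero =>
        rw [Function.iterate_zero_apply, fiberIter_zero_eq, Measure.map_id]
    | succ m ih =>
        rw [← hy m, ih, Measure.map_map (hφcont _).measurable
          (fiberIter_continuous f φ hφcont m y).measurable, ← fiberIter_succ_eq]
  -- positive-measure measurable set G' of good base points
  set g0 : X → ℝ≥0∞ := fun x => μx x {p | (x, p) ∈ Λ} with hg0
  have hint : 1 / 2 < ∫⁻ x, g0 x ∂ν := by rw [← hdisint Λ hΛmeas]; exact hΛμ
  obtain ⟨g, hgmeas, hgle, hgeq⟩ := exists_measurable_le_lintegral_eq ν g0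
  have hgne : ¬ (g =ᵐ[ν] 0) := by
    intro hcontra
    rw [hgeq, lintegral_congr_ae hcontra] at hint
    simp at hint
  set S0 : Set X := {x | g x ≠ 0} with hS0
  have hS0meas : MeasurableSet S0 := (hgmeas (measurableSet_singleton 0)).compl
  have hS0pos : ν S0 ≠ 0 := by
    intro h
    exact hgne (ae_iff.2 (by simpa using h))
  set NΩ : Set X := toMeasurable ν {x | ¬ ∀ m : ℕ,
      (μx (f^[m] x)).map (φ (f^[m] x)) = μx (f^[m + 1] x)} with hNΩ
  have hNΩ0 : ν NΩ = 0 := by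
    rw [hNΩ, measure_toMeasurable]
    exact ae_iff.1 hΩae
  set G' : Set X := S0 \ NΩ with hG'
  have hG'meas : MeasurableSet G' := hS0meas.diff (measurableSet_toMeasurable _ _)
  have hG'pos : ν G' ≠ 0 := by
    intro h
    apply hS0pos
    have : ν S0 ≤ ν G' + ν NΩ := by
      apply (measure_mono (show S0 ⊆ G' ∪ NΩ by
        intro x hx
        by_cases hxN : x ∈ NΩ
        · exact Or.inr hxN
        · exact Or.inl ⟨hx, hxN⟩)).trans (measure_union_le _ _)
    rw [h, hNΩ0, add_zero] at this
    exact le_antisymm this (zero_le)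
  -- key: mass δ in a shrinking ball at all forward times of points in G'
  have key : ∀ y ∈ G', ∀ m : ℕ, ∃ t : M,
      δ ≤ μx (f^[m] y) (Metric.closedBall t (C * c ^ m * R)) := by
    intro y hy m
    have hyS0 : g y ≠ 0 := hy.1
    have hyΩ : ∀ m : ℕ, (μx (f^[m] y)).map (φ (f^[m] y)) = μx (f^[m + 1] y) := by
      by_contra hcon
      exact hy.2 (subset_toMeasurable _ _ hcon)
    have hg0y : g0 y ≠ 0 := fun h => hyS0 (le_antisymm (h ▸ hgle y) (zero_le))
    set Λy : Set M := {q | (y, q) ∈ Λ} with hΛy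
    have hΛyne : Λy.Nonempty := nonempty_of_measure_ne_zero hg0y
    obtain ⟨q0, hq0⟩ := hΛyne
    have hfib : 1 / 2 < μx y Λy := hΛfib (y, q0) hq0
    obtain ⟨a, ha, haδ⟩ := cov (μx y) Λy hfib
    have hane : (Λy ∩ Metric.ball a (R / 2)).Nonempty := by
      apply nonempty_of_measure_ne_zero (μ := μx y)
      intro h
      rw [h] at haδ
      exact absurd haδ (not_le.2 hδpos)
    obtain ⟨q, hqΛ, hqa⟩ := hane
    have hsub : Λy ∩ Metric.ball a (R / 2) ⊆ Metric.closedBall q R := by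
      intro q' ⟨_, hq'a⟩
      rw [Metric.mem_closedBall]
      calc dist q' q ≤ dist q' a + dist a q := dist_triangle _ _ _
        _ ≤ R / 2 + R / 2 :=
            add_le_add (Metric.mem_ball.1 hq'a).le (by rw [dist_comm]; exact (Metric.mem_ball.1 hqa).le)
        _ = R := by ring
    have hmass : δ ≤ μx y (Metric.closedBall q R) := haδ.trans (measure_mono hsub)
    refine ⟨fiberIter f φ m y q, ?_⟩
    have hmap := horb y hyΩ m
    rw [hmap, Measure.map_apply (fiberIter_continuous f φ hφcont m y).measurable
      measurableSet_closedBall]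
    refine hmass.trans (measure_mono ?_)
    intro q' hq'
    rw [Metric.mem_closedBall] at hq'
    simp only [mem_preimage, Metric.mem_closedBall]
    have hd : dist q q' ≤ R := by rw [dist_comm]; exact hq'
    have := hcontr (y, q) hqΛ q' hd m
    rw [dist_comm (fiberIter f φ m y q) (fiberIter f φ m y q')] at this
    calc dist (fiberIter f φ m y q') (fiberIter f φ m y q) ≤ C * c ^ m * dist q q' := this
      _ ≤ C * c ^ m * R := by
          apply mul_le_mul_of_nonneg_left hd
          positivity
  -- the inverse map
  set finv : X → X := Function.invFun f with hfinv
  have hlinv : Function.LeftInverse finv f := Function.leftInverse_invFun hfbij.injective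
  have hrinv : Function.LeftInverse f finv := Function.rightInverse_invFun hfbij.surjective
  have hemb : MeasurableEmbedding f := hf.measurable.measurableEmbedding hfbij.injective
  have hpreim : ∀ A : Set X, finv ⁻¹' A = f '' A := by
    intro A
    ext x
    constructor
    · intro hx
      exact ⟨finv x, hx, hrinv x⟩
    · rintro ⟨a, ha, rfl⟩
      simpa [mem_preimage, hlinv a] using ha
  have hfinv_meas : Measurable finv := by
    intro A hA
    rw [hpreim A]
    exact hemb.measurableSet_image.2 hA
  have hfinv_mp : MeasurePreserving finv ν ν := by
    refine ⟨hfinv_meas, ?_⟩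
    ext A hA
    rw [Measure.map_apply hfinv_meas hA, hpreim A]
    have h1 : ν (f '' A) = ν (f ⁻¹' (f '' A)) :=
      (hf.measure_preimage (hemb.measurableSet_image.2 hA).nullMeasurableSet).symm
    rw [h1, Set.preimage_image_eq A hfbij.injective]
  have hiter : ∀ (m : ℕ) (x : X), f^[m] (finv^[m] x) = x := fun m x => (hrinv.iterate m) x
  -- the recurrence set B
  set B : Set X := {x | ∃ᶠ m in Filter.atTop, finv^[m] x ∈ G'} with hB
  have hBmeas : MeasurableSet B := by
    have hBeq : B = ⋂ n : ℕ, ⋃ m : ℕ, ⋃ _ : n ≤ m, finv^[m] ⁻¹' G' := by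
      ext x
      simp [hB, Filter.frequently_atTop, mem_iInter, mem_iUnion, mem_preimage]
    rw [hBeq]
    exact MeasurableSet.iInter fun n => MeasurableSet.iUnion fun m =>
      MeasurableSet.iUnion fun _ => (hfinv_meas.iterate m) hG'meas
  have hBinv : f ⁻¹' B = B := by
    have hstep : ∀ x, (x ∈ finv ⁻¹' B ↔ x ∈ B) := by
      intro x
      simp only [mem_preimage, hB, mem_setOf_eq]
      have hrw : ∀ m : ℕ, finv^[m] (finv x) = finv^[m + 1] x := by
        intro m
        rw [Function.iterate_succ_apply]
      constructor
      · rw [Filter.frequently_atTop, Filter.frequently_atTop]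
        intro h n
        obtain ⟨m, hm, hmem⟩ := h n
        rw [hrw m] at hmem
        exact ⟨m + 1, hm.trans (Nat.le_succ m), hmem⟩
      · rw [Filter.frequently_atTop, Filter.frequently_atTop]
        intro h n
        obtain ⟨m, hm, hmem⟩ := h (n + 1)
        refine ⟨m - 1, by omega, ?_⟩
        rw [hrw (m - 1), show m - 1 + 1 = m by omega]
        exact hmem
    have h2 : finv ⁻¹' B = B := Set.ext hstep
    calc f ⁻¹' B = f ⁻¹' (finv ⁻¹' B) := by rw [h2]
      _ = B := by
          ext x
          simp only [mem_preimage, hlinv x]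
  -- B has full measure
  have hBfull : ∀ᵐ x ∂ν, x ∈ B := by
    have hrec : ∀ᵐ x ∂ν, x ∈ G' → ∃ᶠ n in Filter.atTop, finv^[n] x ∈ G' :=
      hfinv_mp.conservative.ae_mem_imp_frequently_image_mem hG'meas.nullMeasurableSet
    rcases hferg.ae_empty_or_univ hBmeas hBinv with h0 | h1
    · exfalso
      apply hG'pos
      have hGB : ν (G' \ B) = 0 := by
        apply measure_mono_null _ (ae_iff.1 hrec)
        intro x hx
        simp only [mem_setOf_eq]
        exact fun himp => hx.2 (himp hx.1)
      have hBnull : ν B = 0 := ae_eq_empty.1 h0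
      have : ν G' ≤ ν (G' \ B) + ν B := by
        refine (measure_mono ?_).trans (measure_union_le _ _)
        intro x hx
        by_cases hxB : x ∈ B
        · exact Or.inr hxB
        · exact Or.inl ⟨hx, hxB⟩
      rw [hGB, hBnull, add_zero] at this
      exact le_antisymm this (zero_le)
    · have := ae_eq_univ.1 h1
      rw [ae_iff]
      convert this using 2
      rfl
  filter_upwards [hBfull] with x hxB
  intro _
  have hxB' : ∀ n : ℕ, ∃ m, n ≤ m ∧ finv^[m] x ∈ G' := by
    have := hxB
    simp only [hB, mem_setOf_eq, Filter.frequently_atTop] at this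
    intro n
    obtain ⟨m, hm1, hm2⟩ := this n
    exact ⟨m, hm1, hm2⟩
  have hseq : ∀ n : ℕ, ∃ m, n ≤ m ∧ ∃ tt : M,
      δ ≤ μx x (Metric.closedBall tt (C * c ^ m * R)) := by
    intro n
    obtain ⟨m, hmn, hmem⟩ := hxB' n
    obtain ⟨tt, htt⟩ := key _ hmem m
    rw [hiter m x] at htt
    exact ⟨m, hmn, tt, htt⟩
  choose mm hmm tt htt using hseq
  haveI := hμxprob x
  have hrtend : Filter.Tendsto (fun n => C * c ^ (mm n) * R) Filter.atTop (nhds 0) := by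
    have hup : Filter.Tendsto (fun n : ℕ => C * c ^ n * R) Filter.atTop (nhds 0) := by
      have h1 := tendsto_pow_atTop_nhds_zero_of_lt_one hc0.le hc1
      have h2 := (h1.const_mul C).mul_const R
      simpa using h2
    apply squeeze_zero (fun n => by positivity) (fun n => ?_) hup
    have hpow : c ^ (mm n) ≤ c ^ n := pow_le_pow_of_le_one hc0.le hc1.le (hmm n)
    have : C * c ^ (mm n) ≤ C * c ^ n := mul_le_mul_of_nonneg_left hpow hC.le
    exact mul_le_mul_of_nonneg_right this hR.le
  obtain ⟨p, hp⟩ := atom_of_shrinking_balls (μx x) hrtend (fun n => ⟨tt n, htt n⟩)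
  exact ⟨p, lt_of_lt_of_le hδpos hp⟩
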